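/- Let v_0,...,v_n ∈ ℝ^n and define d(i,j) = ‖v_i − v_j‖². Then the family v_0,...,v_n is affinely independent (i.e., v_1−v_0,...,v_n−v_0 are linearly independent) if and only if det[d(0,i) + d(0,j) − d(i,j)]_{1≤i,j≤n} ≠ 0. -/

import Mathlib

open scoped RealInnerProductSpace Matrix

/-- The points `v_0,…,v_n` are affinely independent (i.e. the differences
`v_i − v_0` are linearly independent) iff the Cayley–Menger-type determinant
`det[d(0,i)+d(0,j)−d(i,j)]_{1≤i,j≤n}` is nonzero, where `d(i,j) = ‖v_i − v_j‖²`. -/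
theorem affineIndependent_iff_det_ne_zero {n : ℕ}
    (v : Fin (n+1) → EuclideanSpace ℝ (Fin n)) :
    LinearIndependent ℝ (fun i : Fin n => v i.succ - v 0) ↔
      Matrix.det (fun i j : Fin n =>
        ‖v 0 - v i.succ‖^2 + ‖v 0 - v j.succ‖^2 - ‖v i.succ - v j.succ‖^2) ≠ 0 := by
  set w : Fin n → EuclideanSpace ℝ (Fin n) := fun i => v i.succ - v 0 with hw
  set B : Matrix (Fin n) (Fin n) ℝ := Matrix.of fun i k => w i k with hB
  have hentry : (fun i j : Fin n =>
      ‖v 0 - v i.succ‖^2 + ‖v 0 - v j.succ‖^2 - ‖v i.succ - v j.succ‖^2)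
      = (2 : ℝ) • (B * Bᵀ) := by
    funext i j
    have h1 : ‖v 0 - v i.succ‖ = ‖w i‖ := by rw [hw]; exact norm_sub_rev _ _
    have h2 : ‖v 0 - v j.succ‖ = ‖w j‖ := by rw [hw]; exact norm_sub_rev _ _
    have h3 : v i.succ - v j.succ = w i - w j := by rw [hw]; exact (sub_sub_sub_cancel_right _ _ _).symm
    have h4 := norm_sub_sq_real (w i) (w j)
    have h5 : (inner ℝ (w i) (w j) : ℝ) = (B * Bᵀ) i j := by
      simp [hB, Matrix.mul_apply, PiLp.inner_apply, RCLike.inner_apply, mul_comm]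
    have : ((2 : ℝ) • (B * Bᵀ)) i j = 2 * (B * Bᵀ) i j := rfl
    rw [this, h1, h2, h3, h4, ← h5]
    ring
  rw [hentry]
  have hdet : ((2 : ℝ) • (B * Bᵀ)).det = 2^n * (B.det * B.det) := by
    rw [Matrix.det_smul, Matrix.det_mul, Matrix.det_transpose]
    simp
  rw [hdet]
  have hli : LinearIndependent ℝ w ↔ LinearIndependent ℝ (fun i => B i) := by
    exact ((WithLp.linearEquiv 2 ℝ (Fin n → ℝ)).toLinearMap.linearIndependent_iff
      (WithLp.linearEquiv 2 ℝ (Fin n → ℝ)).ker).symm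
  rw [hli, show (fun i => B i) = B.row from rfl, Matrix.linearIndependent_rows_iff_isUnit, Matrix.isUnit_iff_isUnit_det,
    isUnit_iff_ne_zero]
  constructor
  · intro h
    positivity
  · intro h hB0
    simp [hB0] at h
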